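/- arXiv:1801.02183 — 4 statements merged into one kernel-verified Lean document; each statement's English description precedes it below -/
import Mathlib

section
/- Let G be a finite simple graph with Kirchhoff matrix L and heat kernel p_t(x,y) = (exp(tL))_{xy}. For vertices x, y with d(x,y) = k finite, the k-th derivative of t ↦ p_t(x,y) at t = 0 equals the number of walks of length k from x to y, and all lower-order derivatives at t = 0 vanish (for x ≠ y). -/
open NormedSpace

section Aux

variable {V : Type*} [Fintype V] [DecidableEq V]

attribute [local instance] Matrix.linftyOpNormedRing Matrix.linftyOpNormedAlgebra

/-- entry map as a continuous linear map -/
noncomputable def entryCLM (x y : V) : Matrix V V ℝ →L[ℝ] ℝ :=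
  LinearMap.toContinuousLinearMap
    { toFun := fun M => M x y
      map_add' := fun _ _ => rfl
      map_smul' := fun _ _ => rfl }

lemma aux_iteratedDeriv (L : Matrix V V ℝ) :
    ∀ (n : ℕ) (M : Matrix V V ℝ) (x y : V),
      iteratedDeriv n (fun t : ℝ => (exp (t • L) * M) x y) 0 = (L ^ n * M) x y := by
  intro n
  induction n with
  | zero =>
    intro M x y
    simp [iteratedDeriv_zero, exp_zero]
  | succ n ih =>
    intro M x y
    rw [iteratedDeriv_succ']
    have hD : (deriv fun t : ℝ => (exp (t • L) * M) x y)
        = fun t : ℝ => (exp (t • L) * (L * M)) x y := by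
      funext t
      have h1 : HasDerivAt (fun u : ℝ => exp (u • L) * M)
          (exp (t • L) * L * M) t :=
        (hasDerivAt_exp_smul_const L t).mul_const M
      have h2 : HasDerivAt (fun u : ℝ => (exp (u • L) * M) x y)
          ((exp (t • L) * L * M) x y) t :=
        ((entryCLM x y).hasFDerivAt).comp_hasDerivAt t h1
      rw [h2.deriv, mul_assoc]
    rw [hD, ih (L * M) x y, ← mul_assoc, ← pow_succ]

lemma lapPow_eq_adjPow (G : SimpleGraph V) [DecidableRel G.Adj] :
    ∀ (m : ℕ) (x z : V), (∀ p : G.Walk x z, m ≤ p.length) →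
      ((G.adjMatrix ℝ - Matrix.diagonal fun v => (G.degree v : ℝ)) ^ m) x z
        = (G.adjMatrix ℝ ^ m) x z := by
  intro m
  induction m with
  | zero => intro x z _; simp
  | succ m ih =>
    intro x z hz
    set A := G.adjMatrix ℝ with hA
    set D : Matrix V V ℝ := Matrix.diagonal fun v => (G.degree v : ℝ) with hDdef
    have hxz0 : ((A - D) ^ m) x z = 0 := by
      rw [ih x z (fun p => Nat.le_of_succ_le (hz p)),
        SimpleGraph.adjMatrix_pow_apply_eq_card_walk]
      have : IsEmpty {p : G.Walk x z | p.length = m} := by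
        refine ⟨fun p => ?_⟩
        have h1 := hz p.1
        have h2 : (p : G.Walk x z).length = m := p.2
        omega
      rw [Fintype.card_eq_zero]
      norm_num
    rw [pow_succ, pow_succ, Matrix.mul_apply, Matrix.mul_apply]
    have step1 : ∀ w, ((A - D) ^ m) x w * (A - D) w z
        = ((A - D) ^ m) x w * A w z - ((A - D) ^ m) x w * D w z := by
      intro w; rw [Matrix.sub_apply, mul_sub]
    rw [Finset.sum_congr rfl (fun w _ => step1 w), Finset.sum_sub_distrib]
    have hdiag : ∑ w, ((A - D) ^ m) x w * D w z = 0 := by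
      rw [Finset.sum_eq_single z]
      · rw [hxz0, zero_mul]
      · intro w _ hw
        rw [hDdef, Matrix.diagonal_apply_ne _ hw, mul_zero]
      · intro hzz; exact absurd (Finset.mem_univ z) hzz
    rw [hdiag, sub_zero]
    apply Finset.sum_congr rfl
    intro w _
    by_cases hadj : G.Adj w z
    · congr 1
      apply ih
      intro p
      have := hz (p.concat hadj)
      rw [SimpleGraph.Walk.length_concat] at this
      omega
    · have : A w z = 0 := by simp [hA, hadj]
      rw [this, mul_zero, mul_zero]

end Aux

/-- The k-th derivative at t = 0 of the heat kernel t ↦ (exp(tL))_{xy}, with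
k = d(x,y), equals the number of walks of length k from x to y, and all
lower-order derivatives vanish. -/
theorem heatKernel_iteratedDeriv_at_zero {V : Type*} [Fintype V] [DecidableEq V]
    (G : SimpleGraph V) [DecidableRel G.Adj]
    (L : Matrix V V ℝ)
    (hL : L = G.adjMatrix ℝ - Matrix.diagonal (fun v => (G.degree v : ℝ)))
    (x y : V) (hxy : x ≠ y) (h : G.Reachable x y)
    (k : ℕ) (hk : G.dist x y = k) :
    iteratedDeriv k (fun t : ℝ => (NormedSpace.exp (t • L)) x y) 0 =
      (Fintype.card {p : G.Walk x y // p.length = k} : ℝ) ∧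
    ∀ m < k, iteratedDeriv m (fun t : ℝ => (NormedSpace.exp (t • L)) x y) 0 = 0 := by
  have key : ∀ n : ℕ,
      iteratedDeriv n (fun t : ℝ => (NormedSpace.exp (t • L)) x y) 0 = (L ^ n) x y := by
    intro n
    have := aux_iteratedDeriv L n 1 x y
    simpa using this
  constructor
  · rw [key k, hL, lapPow_eq_adjPow G k x y (fun p => hk ▸ SimpleGraph.dist_le p),
      SimpleGraph.adjMatrix_pow_apply_eq_card_walk]
    norm_cast
  · intro m hm
    rw [key m, hL, lapPow_eq_adjPow G m x y
        (fun p => le_of_lt (lt_of_lt_of_le hm (hk ▸ SimpleGraph.dist_le p))),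
      SimpleGraph.adjMatrix_pow_apply_eq_card_walk]
    have : IsEmpty {p : G.Walk x y | p.length = m} := by
      refine ⟨fun p => ?_⟩
      have h1 := SimpleGraph.dist_le p.1
      have h2 : (p : G.Walk x y).length = m := p.2
      omega
    rw [Fintype.card_eq_zero]
    norm_num
end

section
/- Let G be a finite simple graph with Kirchhoff matrix L, and let x ≠ y be vertices with d(x,y) = k finite. Then as t → 0⁺, p_t(x,y) = N · t^k / k! + O(t^{k+1}), where N is the number of walks of length k from x to y; more precisely, |p_t(x,y) − N t^k/k!| ≤ C t^{k+1} for all t ∈ (0,1] and some constant C. -/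
open scoped Matrix
open NormedSpace

lemma pow_entry_eq {V : Type*} [Fintype V] [DecidableEq V]
    (G : SimpleGraph V) [DecidableRel G.Adj]
    (L : Matrix V V ℝ)
    (hL : L = G.adjMatrix ℝ - Matrix.diagonal (fun v => (G.degree v : ℝ))) :
    ∀ (n : ℕ) (x y : V), (∀ p : G.Walk x y, n ≤ p.length) →
      (L ^ n) x y = ((G.adjMatrix ℝ) ^ n) x y := by
  intro n
  induction n with
  | zero => intro x y _; simp
  | succ n ih =>
    intro x y hw
    have hA : ((G.adjMatrix ℝ) ^ n) x y = 0 := by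
      rw [SimpleGraph.adjMatrix_pow_apply_eq_card_walk]
      have : IsEmpty {p : G.Walk x y // p.length = n} := by
        constructor; rintro ⟨p, hp⟩
        have := hw p; omega
      simp
      ext p; simp [SimpleGraph.mem_finsetWalkLength_iff]
      exact fun hp => this.false ⟨p, hp⟩
    have hLxy : (L ^ n) x y = 0 :=
      (ih x y (fun p => Nat.le_of_succ_le (hw p))).trans hA
    rw [pow_succ', pow_succ', Matrix.mul_apply, Matrix.mul_apply]
    refine Finset.sum_congr rfl fun z _ => ?_
    rcases eq_or_ne x z with rfl | hxz
    · rw [hLxy, hA, mul_zero, mul_zero]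
    · have hdz : L x z = G.adjMatrix ℝ x z := by
        simp [hL, Matrix.sub_apply, Matrix.diagonal_apply_ne _ hxz]
      rw [hdz]
      by_cases hadj : G.Adj x z
      · rw [ih z y (fun p => by have := hw (p.cons hadj); simpa using this)]
      · simp [SimpleGraph.adjMatrix_apply, hadj]

set_option maxHeartbeats 1000000 in
/-- Varadhan-type small time asymptotics: with k = d(x,y) and N the number of walks of
length k from x to y, p_t(x,y) = N t^k / k! + O(t^{k+1}) as t → 0⁺. -/
theorem heatKernel_small_time_asymptotics {V : Type*} [Fintype V] [DecidableEq V]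
    (G : SimpleGraph V) [DecidableRel G.Adj]
    (L : Matrix V V ℝ)
    (hL : L = G.adjMatrix ℝ - Matrix.diagonal (fun v => (G.degree v : ℝ)))
    (x y : V) (hxy : x ≠ y) (h : G.Reachable x y)
    (k : ℕ) (hk : G.dist x y = k) :
    ∃ C : ℝ, ∀ t ∈ Set.Ioc (0 : ℝ) 1,
      |(NormedSpace.exp (t • L)) x y -
        (Fintype.card {p : G.Walk x y // p.length = k} : ℝ) * t ^ k / (Nat.factorial k : ℝ)|
        ≤ C * t ^ (k + 1) := by
  classical
  letI : SeminormedRing (Matrix V V ℝ) := Matrix.linftyOpSemiNormedRing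
  letI : NormedRing (Matrix V V ℝ) := Matrix.linftyOpNormedRing
  letI : NormedAlgebra ℝ (Matrix V V ℝ) := Matrix.linftyOpNormedAlgebra
  letI : CompleteSpace (Matrix V V ℝ) := (by infer_instance : CompleteSpace (V → V → ℝ))
  -- entry bound for the linfty operator norm
  have entry_le : ∀ (M : Matrix V V ℝ) (a b : V), |M a b| ≤ ‖M‖ := by
    intro M a b
    rw [Matrix.linfty_opNorm_def]
    have h1 : ‖M a b‖₊ ≤ ∑ j, ‖M a j‖₊ :=
      Finset.single_le_sum (f := fun j => ‖M a j‖₊) (fun j _ => zero_le) (Finset.mem_univ b)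
    have h2 : (∑ j, ‖M a j‖₊) ≤ Finset.univ.sup fun i => ∑ j, ‖M i j‖₊ :=
      Finset.le_sup (f := fun i => ∑ j, ‖M i j‖₊) (Finset.mem_univ a)
    have := h1.trans h2
    exact_mod_cast this
  -- the key algebraic facts
  have hpow : ∀ n ≤ k, (L ^ n) x y = ((G.adjMatrix ℝ) ^ n) x y := by
    intro n hn
    exact pow_entry_eq G L hL n x y fun p => hn.trans (hk ▸ SimpleGraph.dist_le p)
  have hzero : ∀ n < k, (L ^ n) x y = 0 := by
    intro n hn
    rw [hpow n hn.le, SimpleGraph.adjMatrix_pow_apply_eq_card_walk]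
    have : IsEmpty {p : G.Walk x y // p.length = n} := by
      constructor; rintro ⟨p, hp⟩
      have := hk ▸ SimpleGraph.dist_le p; omega
    simp
    ext p; simp [SimpleGraph.mem_finsetWalkLength_iff]
    exact fun hp => this.false ⟨p, hp⟩
  have hkk : (L ^ k) x y = (Fintype.card {p : G.Walk x y // p.length = k} : ℝ) := by
    rw [hpow k le_rfl, SimpleGraph.adjMatrix_pow_apply_eq_card_walk]
    norm_cast
  -- the constant
  have hcs : Summable (fun n : ℕ => ‖L‖ ^ (n + (k + 1)) / (Nat.factorial (n + (k + 1)) : ℝ)) :=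
    ((summable_nat_add_iff (k + 1)).2 (Real.summable_pow_div_factorial ‖L‖))
  refine ⟨∑' n : ℕ, ‖L‖ ^ (n + (k + 1)) / (Nat.factorial (n + (k + 1)) : ℝ), ?_⟩
  rintro t ⟨ht0, ht1⟩
  -- expand the exponential entrywise
  have hs : Summable (fun n : ℕ => ((Nat.factorial n : ℝ)⁻¹) • (t • L) ^ n) :=
    NormedSpace.expSeries_summable' (𝕂 := ℝ) (t • L)
  let F : ℕ → V → V → ℝ := fun n => ((Nat.factorial n : ℝ)⁻¹) • (t • L) ^ n
  have hsF : Summable F := hs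
  have hs1 : Summable (fun n : ℕ => (((Nat.factorial n : ℝ)⁻¹) • (t • L) ^ n) x) :=
    Pi.summable.1 hsF x
  have hs2 : Summable (fun n : ℕ => (((Nat.factorial n : ℝ)⁻¹) • (t • L) ^ n) x y) :=
    hs1.map (ContinuousLinearMap.proj (R := ℝ) (φ := fun _ : V => ℝ) y)
      (ContinuousLinearMap.continuous _)
  have hent : (NormedSpace.exp (t • L)) x y
      = ∑' n : ℕ, (((Nat.factorial n : ℝ)⁻¹) • (t • L) ^ n) x y := by
    simp only [NormedSpace.exp_eq_tsum ℝ]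
    exact (congrFun (tsum_apply (x := x) hsF) y).trans (tsum_apply (x := y) hs1)
  set g : ℕ → ℝ := fun n => (((Nat.factorial n : ℝ)⁻¹) • (t • L) ^ n) x y with hg
  have hgdef : ∀ n, g n = (Nat.factorial n : ℝ)⁻¹ * t ^ n * ((L ^ n) x y) := by
    intro n
    simp [hg, smul_pow, Matrix.smul_apply, mul_assoc]
  -- split the series
  have hsplit := hs2.sum_add_tsum_nat_add (k + 1)
  have hhead : (∑ i ∈ Finset.range (k + 1), g i)
      = (Fintype.card {p : G.Walk x y // p.length = k} : ℝ) * t ^ k / (Nat.factorial k : ℝ) := by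
    rw [Finset.sum_eq_single_of_mem k (Finset.self_mem_range_succ k)]
    · rw [hgdef k, hkk]; ring
    · intro b hbmem hb
      have hblt := Finset.mem_range.mp hbmem
      have hbk : b < k := by omega
      rw [hgdef b, hzero b hbk]; ring
  have hmain : (NormedSpace.exp (t • L)) x y -
      (Fintype.card {p : G.Walk x y // p.length = k} : ℝ) * t ^ k / (Nat.factorial k : ℝ)
      = ∑' n : ℕ, g (n + (k + 1)) := by
    rw [hent, ← hsplit, hhead]; ring
  rw [hmain]
  -- bound the tail
  have hb : ∀ n : ℕ, ‖g (n + (k + 1))‖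
      ≤ (‖L‖ ^ (n + (k + 1)) / (Nat.factorial (n + (k + 1)) : ℝ)) * t ^ (k + 1) := by
    intro n
    rw [Real.norm_eq_abs, hgdef]
    have h1 : |(L ^ (n + (k + 1))) x y| ≤ ‖L‖ ^ (n + (k + 1)) :=
      (entry_le _ x y).trans (norm_pow_le' L (Nat.succ_le_of_lt (Nat.lt_of_lt_of_le
        (Nat.zero_lt_succ k) (by omega))))
    have h2 : t ^ (n + (k + 1)) ≤ t ^ (k + 1) :=
      pow_le_pow_of_le_one ht0.le ht1 (by omega)
    have h3 : (0:ℝ) < (Nat.factorial (n + (k + 1)) : ℝ) := by positivity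
    rw [abs_mul, abs_mul, abs_inv, abs_of_nonneg (Nat.cast_nonneg _),
      abs_of_nonneg (pow_nonneg ht0.le _)]
    calc (Nat.factorial (n + (k + 1)) : ℝ)⁻¹ * t ^ (n + (k + 1)) * |(L ^ (n + (k + 1))) x y|
        ≤ (Nat.factorial (n + (k + 1)) : ℝ)⁻¹ * t ^ (k + 1) * (‖L‖ ^ (n + (k + 1))) := by
          apply mul_le_mul
          · apply mul_le_mul_of_nonneg_left h2 (by positivity)
          · exact h1
          · exact abs_nonneg _
          · positivity
      _ = (‖L‖ ^ (n + (k + 1)) / (Nat.factorial (n + (k + 1)) : ℝ)) * t ^ (k + 1) := by ring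
  have hcs' : Summable (fun n : ℕ => (‖L‖ ^ (n + (k + 1)) / (Nat.factorial (n + (k + 1)) : ℝ)) * t ^ (k + 1)) :=
    hcs.mul_right _
  have := tsum_of_norm_bounded hcs'.hasSum hb
  rw [Real.norm_eq_abs] at this
  calc |∑' n : ℕ, g (n + (k + 1))|
      ≤ ∑' n : ℕ, (‖L‖ ^ (n + (k + 1)) / (Nat.factorial (n + (k + 1)) : ℝ)) * t ^ (k + 1) := this
    _ = (∑' n : ℕ, ‖L‖ ^ (n + (k + 1)) / (Nat.factorial (n + (k + 1)) : ℝ)) * t ^ (k + 1) :=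
        tsum_mul_right
end

section
/- Let G be a finite simple bipartite graph with Kirchhoff matrix L = A − D, and let x ≠ y with d(x,y) = k finite. Then (L^{k+1})_{xy} < 0, i.e., the coefficient of t^{k+1} in the expansion of p_t(x,y) is strictly negative. -/
open SimpleGraph Matrix Finset

section Aux

variable {V : Type*} [Fintype V] [DecidableEq V]
  (G : SimpleGraph V) [DecidableRel G.Adj]

/-- In a 2-colored graph, a walk's length parity is determined by endpoint colors. -/
lemma walk_even_iff (c : G.Coloring (Fin 2)) {x y : V} (p : G.Walk x y) :
    Even p.length ↔ c x = c y := by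
  induction p with
  | nil => simp
  | cons h p ih =>
    rw [SimpleGraph.Walk.length_cons, Nat.even_add_one, ih]
    have hne := c.valid h
    revert hne
    have : ∀ a b d : Fin 2, a ≠ b → (¬(b = d) ↔ a = d) := by decide
    exact this _ _ _

lemma even_dist_iff (c : G.Coloring (Fin 2)) {x y : V} (hr : G.Reachable x y) :
    Even (G.dist x y) ↔ c x = c y := by
  obtain ⟨p, hp⟩ := hr.exists_walk_length_eq_dist
  rw [← hp]
  exact walk_even_iff G c p

variable (L : Matrix V V ℝ)
  (hL : L = G.adjMatrix ℝ - Matrix.diagonal (fun v => (G.degree v : ℝ)))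

include hL

/-- If an entry of `L ^ m` is nonzero there is a walk of length at most `m`. -/
lemma L_support : ∀ (m : ℕ) (x y : V), (L ^ m) x y ≠ 0 → ∃ p : G.Walk x y, p.length ≤ m := by
  intro m
  induction m with
  | zero =>
    intro x y h
    rw [pow_zero] at h
    have hxy : x = y := by
      by_contra hne
      exact h (Matrix.one_apply_ne hne)
    subst hxy
    exact ⟨SimpleGraph.Walk.nil, le_refl 0⟩
  | succ n ih =>
    intro x y h
    rw [pow_succ', Matrix.mul_apply] at h
    obtain ⟨z, _, hz⟩ := Finset.exists_ne_zero_of_sum_ne_zero h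
    have h1 : L x z ≠ 0 := fun e => hz (by simp [e])
    have h2 : (L ^ n) z y ≠ 0 := fun e => hz (by simp [e])
    obtain ⟨p, hp⟩ := ih z y h2
    by_cases hxz : x = z
    · subst hxz
      exact ⟨p, hp.trans (Nat.le_succ n)⟩
    · have hadj : G.Adj x z := by
        by_contra hna
        apply h1
        rw [hL]
        simp [Matrix.diagonal_apply_ne _ hxz, hna]
      exact ⟨SimpleGraph.Walk.cons hadj p, by simpa using Nat.succ_le_succ hp⟩

lemma L_entry_zero (m : ℕ) (x y : V) (hd : m < G.dist x y) : (L ^ m) x y = 0 := by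
  by_contra h
  obtain ⟨p, hp⟩ := L_support G L hL m x y h
  exact absurd (SimpleGraph.dist_le p) (by omega)

/-- On the "distance sphere", `L ^ m` agrees with `A ^ m`. -/
lemma L_eq_A : ∀ (m : ℕ) (x y : V), G.Reachable x y → G.dist x y = m →
    (L ^ m) x y = (G.adjMatrix ℝ ^ m) x y := by
  intro m
  induction m with
  | zero =>
    intro x y hr hd
    have hxy : x = y := hr.dist_eq_zero_iff.mp hd
    subst hxy
    rw [pow_zero, pow_zero]
  | succ n ih =>
    intro x y hr hd
    rw [pow_succ', pow_succ', Matrix.mul_apply, Matrix.mul_apply]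
    apply Finset.sum_congr rfl
    intro z _
    by_cases hxz : x = z
    · subst hxz
      have h0 : (L ^ n) x y = 0 := L_entry_zero G L hL n x y (by omega)
      simp [h0]
    · have hLA : L x z = G.adjMatrix ℝ x z := by
        rw [hL]; simp [Matrix.diagonal_apply_ne _ hxz]
      rw [hLA]
      by_cases hadj : G.Adj x z
      · have hrz : G.Reachable z y := (hadj.reachable).symm.trans hr
        have hge : n ≤ G.dist z y := by
          obtain ⟨p, hp⟩ := hrz.exists_walk_length_eq_dist
          have := SimpleGraph.dist_le (SimpleGraph.Walk.cons hadj p)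
          simp only [SimpleGraph.Walk.length_cons, hp] at this
          omega
        by_cases hdz : G.dist z y = n
        · rw [ih z y hrz hdz]
        · have hgt : n < G.dist z y := by omega
          rw [L_entry_zero G L hL n z y hgt]
          have hA : (G.adjMatrix ℝ ^ n) z y = 0 := by
            rw [SimpleGraph.adjMatrix_pow_apply_eq_card_walk]
            rw [Nat.cast_eq_zero, Fintype.card_eq_zero_iff]
            exact ⟨fun ⟨p, hp⟩ => absurd (SimpleGraph.dist_le p) (by
              simp only [Set.mem_setOf_eq] at hp; omega)⟩
          rw [hA]
      · simp [SimpleGraph.adjMatrix_apply, hadj]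

lemma A_pow_pos (m : ℕ) (x y : V) (hr : G.Reachable x y) (hd : G.dist x y = m) :
    0 < (G.adjMatrix ℝ ^ m) x y := by
  rw [SimpleGraph.adjMatrix_pow_apply_eq_card_walk, Nat.cast_pos, Fintype.card_pos_iff]
  obtain ⟨p, hp⟩ := hr.exists_walk_length_eq_dist
  exact ⟨⟨p, by rw [Set.mem_setOf_eq, hp, hd]⟩⟩

lemma main_aux (c : G.Coloring (Fin 2)) :
    ∀ (m : ℕ) (x y : V), G.Reachable x y → G.dist x y = m → 0 < G.degree x →
      (L ^ (m + 1)) x y < 0 := by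
  intro m
  induction m using Nat.strong_induction_on with
  | _ m IH =>
    intro x y hr hd hdeg
    match m with
    | 0 =>
      have hxy : x = y := hr.dist_eq_zero_iff.mp hd
      subst hxy
      rw [pow_one, hL]
      simp only [Matrix.sub_apply, SimpleGraph.adjMatrix_apply,
        Matrix.diagonal_apply_eq]
      simp only [SimpleGraph.irrefl, if_false, zero_sub, neg_neg, neg_lt, neg_zero]
      exact_mod_cast hdeg
    | n + 1 =>
      rw [pow_succ', Matrix.mul_apply]
      have hsplit : ∀ z ∈ Finset.univ (α := V),
          L x z * (L ^ (n + 1)) z y =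
            G.adjMatrix ℝ x z * (L ^ (n + 1)) z y
              - Matrix.diagonal (fun v => (G.degree v : ℝ)) x z * (L ^ (n + 1)) z y := by
        intro z _
        rw [hL, Matrix.sub_apply, sub_mul]
      rw [Finset.sum_congr rfl hsplit, Finset.sum_sub_distrib]
      have hdiag : ∑ z, Matrix.diagonal (fun v => (G.degree v : ℝ)) x z * (L ^ (n + 1)) z y
          = (G.degree x : ℝ) * (L ^ (n + 1)) x y := by
        rw [Finset.sum_eq_single x]
        · simp
        · intro b _ hb
          rw [Matrix.diagonal_apply_ne _ (Ne.symm hb), zero_mul]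
        · intro hx; exact absurd (Finset.mem_univ x) hx
      rw [hdiag, L_eq_A G L hL (n + 1) x y hr hd]
      have hpos : 0 < (G.degree x : ℝ) * (G.adjMatrix ℝ ^ (n + 1)) x y :=
        mul_pos (by exact_mod_cast hdeg) (A_pow_pos G L hL (n + 1) x y hr hd)
      have hsum : ∑ z, G.adjMatrix ℝ x z * (L ^ (n + 1)) z y ≤ 0 := by
        apply Finset.sum_nonpos
        intro z _
        by_cases hadj : G.Adj x z
        · rw [SimpleGraph.adjMatrix_apply, if_pos hadj, one_mul]
          have hrz : G.Reachable z y := (hadj.reachable).symm.trans hr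
          have hge : n ≤ G.dist z y := by
            obtain ⟨p, hp⟩ := hrz.exists_walk_length_eq_dist
            have := SimpleGraph.dist_le (SimpleGraph.Walk.cons hadj p)
            simp only [SimpleGraph.Walk.length_cons, hp] at this
            omega
          have hne : G.dist z y ≠ n + 1 := by
            intro heq
            have h1 := even_dist_iff G c hr
            have h2 := even_dist_iff G c hrz
            rw [hd] at h1
            rw [heq] at h2
            have hcc := c.valid hadj
            have : ∀ a b d : Fin 2, a ≠ b → (a = d ↔ b = d) → False := by decide
            exact this _ _ _ hcc (h1.symm.trans h2)
          rcases eq_or_lt_of_le hge with heq | hlt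
          · exact le_of_lt (IH n (by omega) z y hrz heq.symm
              ((G.degree_pos_iff_exists_adj z).mpr ⟨x, hadj.symm⟩))
          · have : n + 1 < G.dist z y := by omega
            rw [L_entry_zero G L hL (n + 1) z y this]
        · rw [SimpleGraph.adjMatrix_apply, if_neg hadj, zero_mul]
      linarith

end Aux

/-- In a bipartite graph, for x ≠ y with d(x,y) = k, the coefficient (L^{k+1})_{xy}
of t^{k+1} in the heat kernel expansion is strictly negative. -/
theorem bipartite_next_coefficient_neg {V : Type*} [Fintype V] [DecidableEq V]
    (G : SimpleGraph V) [DecidableRel G.Adj] (hbip : G.Colorable 2)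
    (L : Matrix V V ℝ)
    (hL : L = G.adjMatrix ℝ - Matrix.diagonal (fun v => (G.degree v : ℝ)))
    (x y : V) (hxy : x ≠ y) (h : G.Reachable x y)
    (k : ℕ) (hk : G.dist x y = k) :
    (L ^ (k + 1)) x y < 0 := by
  obtain ⟨c⟩ := hbip
  have hdeg : 0 < G.degree x := by
    have hdne : G.dist x y ≠ 0 := by
      rw [SimpleGraph.dist_ne_zero_iff_ne_and_reachable]; exact ⟨hxy, h⟩
    obtain ⟨p, hp⟩ := h.exists_walk_length_eq_dist
    cases p with
    | nil => simp [SimpleGraph.dist_self] at hdne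
    | cons hadj q => exact (G.degree_pos_iff_exists_adj x).mpr ⟨_, hadj⟩
  exact main_aux G L hL c k x y h hk hdeg
end

section
/- Let G be a finite simple graph with Kirchhoff matrix L and x ≠ y with d(x,y) = k finite. Then lim_{t→0⁺} log p_t(x,y) / log t = d(x,y). -/
open Filter Real

section Aux

variable {V : Type*} [Fintype V] [DecidableEq V]

/-- If a matrix is supported on the diagonal and adjacent pairs, a nonzero entry of its
`n`-th power yields a walk of length at most `n`. -/
lemma aux_walk_of_pow_ne_zero (G : SimpleGraph V) (M : Matrix V V ℝ)
    (hM : ∀ i j, M i j ≠ 0 → i = j ∨ G.Adj i j) :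
    ∀ n (i j : V), (M ^ n) i j ≠ 0 → ∃ p : G.Walk i j, p.length ≤ n := by
  intro n
  induction n with
  | zero =>
    intro i j hij
    rw [pow_zero] at hij
    by_cases hij' : i = j
    · subst hij'; exact ⟨SimpleGraph.Walk.nil, by simp⟩
    · simp [Matrix.one_apply_ne hij'] at hij
  | succ n ih =>
    intro i j hij
    rw [pow_succ', Matrix.mul_apply] at hij
    obtain ⟨z, -, hz⟩ := Finset.exists_ne_zero_of_sum_ne_zero hij
    have h1 : M i z ≠ 0 := fun h0 => hz (by simp [h0])
    have h2 : (M ^ n) z j ≠ 0 := fun h0 => hz (by simp [h0])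
    obtain ⟨p, hp⟩ := ih z j h2
    rcases hM i z h1 with rfl | hadj
    · exact ⟨p, hp.trans (Nat.le_succ n)⟩
    · exact ⟨SimpleGraph.Walk.cons hadj p, by simpa using Nat.succ_le_succ hp⟩

lemma aux_pow_eq_zero (G : SimpleGraph V) (M : Matrix V V ℝ)
    (hM : ∀ i j, M i j ≠ 0 → i = j ∨ G.Adj i j) (n : ℕ) (i j : V)
    (hn : ∀ p : G.Walk i j, ¬ p.length ≤ n) : (M ^ n) i j = 0 := by
  by_contra hne
  obtain ⟨p, hp⟩ := aux_walk_of_pow_ne_zero G M hM n i j hne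
  exact hn p hp

lemma aux_entry_bound (M : Matrix V V ℝ) :
    ∃ R : ℝ, 1 ≤ R ∧ ∀ n (i j : V), |(M ^ n) i j| ≤ R ^ n := by
  set b : ℝ := ∑ i, ∑ j, |M i j| with hb
  have hb0 : 0 ≤ b := Finset.sum_nonneg fun i _ => Finset.sum_nonneg fun j _ => abs_nonneg _
  have hMb : ∀ i j, |M i j| ≤ b := by
    intro i j
    calc |M i j| ≤ ∑ j', |M i j'| :=
          Finset.single_le_sum (f := fun j' => |M i j'|) (fun _ _ => abs_nonneg _) (Finset.mem_univ j)
      _ ≤ b := Finset.single_le_sum (f := fun i => ∑ j', |M i j'|)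
          (fun _ _ => Finset.sum_nonneg fun _ _ => abs_nonneg _) (Finset.mem_univ i)
  refine ⟨1 + (Fintype.card V : ℝ) * b, le_add_of_nonneg_right (by positivity), ?_⟩
  intro n
  induction n with
  | zero =>
    intro i j
    rw [pow_zero, pow_zero, Matrix.one_apply]
    split <;> simp
  | succ n ih =>
    intro i j
    rw [pow_succ, Matrix.mul_apply]
    have hcb : (0:ℝ) ≤ (Fintype.card V : ℝ) * b := by positivity
    have hpow : (0:ℝ) ≤ (1 + (Fintype.card V : ℝ) * b) ^ n := by positivity
    calc |∑ z, (M ^ n) i z * M z j| ≤ ∑ z, |(M ^ n) i z * M z j| :=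
          Finset.abs_sum_le_sum_abs _ _
      _ ≤ ∑ _z : V, (1 + (Fintype.card V : ℝ) * b) ^ n * b := by
          refine Finset.sum_le_sum fun z _ => ?_
          rw [abs_mul]
          exact mul_le_mul (ih i z) (hMb z j) (abs_nonneg _) hpow
      _ = (Fintype.card V : ℝ) * b * (1 + (Fintype.card V : ℝ) * b) ^ n := by
          rw [Finset.sum_const, Finset.card_univ, nsmul_eq_mul]; ring
      _ ≤ (1 + (Fintype.card V : ℝ) * b) * (1 + (Fintype.card V : ℝ) * b) ^ n := by
          nlinarith
      _ = (1 + (Fintype.card V : ℝ) * b) ^ (n + 1) := (pow_succ' _ _).symm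

/-- On a geodesic scale, the powers of the Kirchhoff matrix agree with the powers of
the adjacency matrix. -/
lemma aux_Lpow_eq_Apow (G : SimpleGraph V) [DecidableRel G.Adj]
    (L : Matrix V V ℝ)
    (hL : L = G.adjMatrix ℝ - Matrix.diagonal (fun v => (G.degree v : ℝ)))
    (hLs : ∀ i j, L i j ≠ 0 → i = j ∨ G.Adj i j) (y : V) :
    ∀ n (i : V), G.Reachable i y → G.dist i y = n →
      (L ^ n) i y = (G.adjMatrix ℝ ^ n) i y := by
  have hAs : ∀ i j, (G.adjMatrix ℝ) i j ≠ 0 → i = j ∨ G.Adj i j := by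
    intro i j hij
    by_contra hcon
    push_neg at hcon
    simp [SimpleGraph.adjMatrix_apply, hcon.2] at hij
  intro n
  induction n with
  | zero => intro i _ _; simp
  | succ n ih =>
    intro i hreach hdist
    rw [pow_succ', pow_succ', Matrix.mul_apply, Matrix.mul_apply]
    refine Finset.sum_congr rfl fun z _ => ?_
    by_cases hadj : G.Adj i z
    · have hLiz : L i z = 1 := by
        rw [hL]
        simp [Matrix.sub_apply, Matrix.diagonal_apply_ne _ hadj.ne, hadj]
      have hAiz : (G.adjMatrix ℝ) i z = 1 := by simp [hadj]
      rw [hLiz, hAiz, one_mul, one_mul]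
      by_cases hc : G.Reachable z y ∧ G.dist z y = n
      · exact ih z hc.1 hc.2
      · have hz : ∀ p : G.Walk z y, ¬ p.length ≤ n := by
          intro p hp
          apply hc
          have hrzy : G.Reachable z y := ⟨p⟩
          refine ⟨hrzy, ?_⟩
          have h1 : G.dist z y ≤ n := (SimpleGraph.dist_le p).trans hp
          obtain ⟨q, hq⟩ := hrzy.exists_walk_length_eq_dist
          have h2 := SimpleGraph.dist_le (SimpleGraph.Walk.cons hadj q)
          rw [SimpleGraph.Walk.length_cons, hq] at h2
          omega
        rw [aux_pow_eq_zero G L hLs n z y hz, aux_pow_eq_zero G _ hAs n z y hz]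
    · by_cases hiz : i = z
      · subst hiz
        have hLn : (L ^ n) i y = 0 := by
          apply aux_pow_eq_zero G L hLs
          intro p hp
          have := SimpleGraph.dist_le p
          omega
        simp [hLn, SimpleGraph.adjMatrix_apply, hadj]
      · have hLiz : L i z = 0 := by
          rw [hL]
          simp [Matrix.sub_apply, Matrix.diagonal_apply_ne _ hiz,
            SimpleGraph.adjMatrix_apply, hadj]
        have hAiz : (G.adjMatrix ℝ) i z = 0 := by simp [hadj]
        rw [hLiz, hAiz, zero_mul, zero_mul]

lemma aux_abs_tsum_le (f : ℕ → ℝ) (hf : Summable fun n => |f n|) :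
    |∑' n, f n| ≤ ∑' n, |f n| := by
  simpa [Real.norm_eq_abs] using
    norm_tsum_le_tsum_norm (f := f) (by simpa [Real.norm_eq_abs] using hf)

end Aux

set_option maxHeartbeats 1000000

/-- lim_{t → 0⁺} log p_t(x,y) / log t = d(x,y). -/
theorem heatKernel_log_limit {V : Type*} [Fintype V] [DecidableEq V]
    (G : SimpleGraph V) [DecidableRel G.Adj]
    (L : Matrix V V ℝ)
    (hL : L = G.adjMatrix ℝ - Matrix.diagonal (fun v => (G.degree v : ℝ)))
    (x y : V) (hxy : x ≠ y) (h : G.Reachable x y) :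
    Filter.Tendsto
      (fun t : ℝ => Real.log ((NormedSpace.exp (t • L)) x y) / Real.log t)
      (nhdsWithin 0 (Set.Ioi 0)) (nhds (G.dist x y : ℝ)) := by
  classical
  set k := G.dist x y with hk
  -- support of L
  have hLs : ∀ i j, L i j ≠ 0 → i = j ∨ G.Adj i j := by
    intro i j hij
    by_contra hcon
    push_neg at hcon
    apply hij
    rw [hL]
    simp [Matrix.sub_apply, SimpleGraph.adjMatrix_apply, hcon.2,
      Matrix.diagonal_apply_ne _ hcon.1]
  set c : ℕ → ℝ := fun n => (L ^ n) x y with hc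
  obtain ⟨R, hR1, hRb⟩ := aux_entry_bound L
  have hR0 : 0 < R := lt_of_lt_of_le one_pos hR1
  -- positivity of the leading coefficient
  have hck : 0 < c k := by
    have h1 : c k = (G.adjMatrix ℝ ^ k) x y :=
      aux_Lpow_eq_Apow G L hL hLs y k x h rfl
    rw [hc] at h1 ⊢
    rw [h1, SimpleGraph.adjMatrix_pow_apply_eq_card_walk]
    have hpos : 0 < Fintype.card {p : G.Walk x y | p.length = k} := by
      obtain ⟨p, hp⟩ := h.exists_walk_length_eq_dist
      exact Fintype.card_pos_iff.mpr ⟨⟨p, hp⟩⟩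
    exact_mod_cast hpos
  -- summability of the entry series
  have key_abs_sum : ∀ (t : ℝ) (m : ℕ) (i j : V),
      Summable (fun n : ℕ => |t ^ n * (L ^ (n + m)) i j / (Nat.factorial (n + m) : ℝ)|) := by
    intro t m i j
    refine Summable.of_nonneg_of_le (f := fun n => R ^ m * ((|t| * R) ^ n / (Nat.factorial n)))
      (fun n => abs_nonneg _) (fun n => ?_)
      ((Real.summable_pow_div_factorial (|t| * R)).mul_left _)
    · 
      have h1 : |(L ^ (n + m)) i j| ≤ R ^ (n + m) := hRb (n + m) i j
      have h2 : (Nat.factorial n : ℝ) ≤ (Nat.factorial (n + m) : ℝ) := by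
        exact_mod_cast Nat.factorial_le (Nat.le_add_right n m)
      calc |t ^ n * (L ^ (n + m)) i j / (Nat.factorial (n + m) : ℝ)|
          = |t| ^ n * |(L ^ (n + m)) i j| / ((Nat.factorial (n + m)) : ℝ) := by
            rw [abs_div, abs_mul, abs_pow, Nat.abs_cast]
        _ ≤ |t| ^ n * R ^ (n + m) / (Nat.factorial n : ℝ) := by
            refine div_le_div₀ (by positivity)
              (mul_le_mul_of_nonneg_left h1 (by positivity)) (by positivity) h2
        _ = R ^ m * ((|t| * R) ^ n / (Nat.factorial n)) := by
            rw [pow_add, mul_pow]; ring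
  -- the entry of the heat kernel as a scalar series
  have hexp : ∀ t : ℝ, (NormedSpace.exp (t • L)) x y = ∑' n : ℕ, t ^ n * c n / (Nat.factorial n : ℝ) := by
    intro t
    have heq : ∀ (n : ℕ) (i j : V),
        (((Nat.factorial n : ℝ))⁻¹ • (t • L) ^ n) i j = t ^ n * (L ^ n) i j / (Nat.factorial n : ℝ) := by
      intro n i j
      rw [smul_pow, Matrix.smul_apply, Matrix.smul_apply, smul_eq_mul, smul_eq_mul]
      ring
    have hs : Summable (fun n : ℕ => ((Nat.factorial n : ℝ))⁻¹ • (t • L) ^ n) := by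
      refine Pi.summable.mpr fun i => Pi.summable.mpr fun j => ?_
      exact ((key_abs_sum t 0 i j).of_abs).congr fun n => (heq n i j).symm
    have h1 := (Pi.hasSum.mp hs.hasSum) x
    have h2 := (Pi.hasSum.mp h1) y
    have hE : (NormedSpace.exp (t • L)) x y
        = (∑' n : ℕ, ((Nat.factorial n : ℝ))⁻¹ • (t • L) ^ n) x y := by
      rw [NormedSpace.exp_eq_tsum ℝ]
    rw [hE, ← h2.tsum_eq]
    exact tsum_congr fun n => heq n x y
  -- vanishing coefficients below k
  have hc0 : ∀ n < k, c n = 0 := by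
    intro n hn
    apply aux_pow_eq_zero G L hLs
    intro p hp
    have := SimpleGraph.dist_le p
    omega
  -- factor out t^k
  set hfun : ℝ → ℝ := fun t => ∑' n : ℕ, t ^ n * c (n + k) / (Nat.factorial (n + k) : ℝ) with hh
  have hfactor : ∀ t : ℝ, (∑' n : ℕ, t ^ n * c n / (Nat.factorial n : ℝ)) = t ^ k * hfun t := by
    intro t
    have h1 : (∑' n : ℕ, t ^ n * c n / (Nat.factorial n : ℝ))
        = ∑' n : ℕ, t ^ (n + k) * c (n + k) / (Nat.factorial (n + k) : ℝ) := by
      symm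
      apply Function.Injective.tsum_eq (g := fun n : ℕ => n + k)
        (f := fun n : ℕ => t ^ n * c n / (Nat.factorial n : ℝ)) (add_left_injective k)
      intro m hm
      rcases le_or_gt k m with hge | hmk
      · exact ⟨m - k, by show m - k + k = m; omega⟩
      · simp [Function.mem_support, hc0 m hmk] at hm
    rw [h1, hh]
    rw [← tsum_mul_left]
    exact tsum_congr fun n => by rw [pow_add]; ring
  -- the limit of hfun at 0⁺
  have hsumS : Summable (fun n : ℕ => |c (n + 1 + k)| / (Nat.factorial (n + 1 + k) : ℝ)) := by
    have h0 := key_abs_sum 1 (1 + k) x y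
    refine h0.congr fun n => ?_
    have e : n + (1 + k) = n + 1 + k := by omega
    rw [hc, e, abs_div, abs_mul, abs_pow, abs_one, one_pow, one_mul, Nat.abs_cast]
  set S : ℝ := ∑' n : ℕ, |c (n + 1 + k)| / (Nat.factorial (n + 1 + k) : ℝ) with hS
  have hest : ∀ t : ℝ, |t| ≤ 1 → |hfun t - c k / (Nat.factorial k : ℝ)| ≤ S * |t| := by
    intro t ht
    have hfa : Summable (fun n : ℕ => |t ^ n * c (n + k) / (Nat.factorial (n + k) : ℝ)|) :=
      key_abs_sum t k x y
    have hsum_t : Summable (fun n : ℕ => t ^ n * c (n + k) / (Nat.factorial (n + k) : ℝ)) := hfa.of_abs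
    have hfa1 : Summable (fun n : ℕ => |t ^ (n + 1) * c (n + 1 + k) / (Nat.factorial (n + 1 + k) : ℝ)|) := by
      exact hfa.comp_injective (add_left_injective 1)
    have h1 : hfun t = c k / (Nat.factorial k : ℝ)
        + ∑' n : ℕ, t ^ (n + 1) * c (n + 1 + k) / (Nat.factorial (n + 1 + k) : ℝ) := by
      show (∑' n : ℕ, t ^ n * c (n + k) / (Nat.factorial (n + k) : ℝ)) = _
      rw [hsum_t.tsum_eq_zero_add]
      simp
    have hterm : ∀ n : ℕ, |t ^ (n + 1) * c (n + 1 + k) / (Nat.factorial (n + 1 + k) : ℝ)|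
        ≤ |t| * (|c (n + 1 + k)| / (Nat.factorial (n + 1 + k) : ℝ)) := by
      intro n
      rw [abs_div, abs_mul, abs_pow, Nat.abs_cast, pow_succ']
      have hle : |t| ^ n ≤ 1 := pow_le_one₀ (abs_nonneg t) ht
      have hrw : |t| * |t| ^ n * |c (n + 1 + k)| / (Nat.factorial (n + 1 + k) : ℝ)
          = |t| ^ n * (|t| * (|c (n + 1 + k)| / (Nat.factorial (n + 1 + k) : ℝ))) := by ring
      rw [hrw]
      exact mul_le_of_le_one_left (by positivity) hle
    rw [h1, add_sub_cancel_left]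
    calc |∑' n : ℕ, t ^ (n + 1) * c (n + 1 + k) / (Nat.factorial (n + 1 + k) : ℝ)|
        ≤ ∑' n : ℕ, |t ^ (n + 1) * c (n + 1 + k) / (Nat.factorial (n + 1 + k) : ℝ)| :=
          aux_abs_tsum_le _ hfa1
      _ ≤ ∑' n : ℕ, |t| * (|c (n + 1 + k)| / (Nat.factorial (n + 1 + k) : ℝ)) :=
          Summable.tsum_le_tsum hterm hfa1 (hsumS.mul_left _)
      _ = S * |t| := by rw [tsum_mul_left, hS]; ring
  have ha0 : 0 < c k / (Nat.factorial k : ℝ) := div_pos hck (by positivity)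
  have htends : Tendsto hfun (nhdsWithin 0 (Set.Ioi 0)) (nhds (c k / (Nat.factorial k : ℝ))) := by
    have h0 : Tendsto (fun t : ℝ => hfun t - c k / (Nat.factorial k : ℝ))
        (nhdsWithin 0 (Set.Ioi 0)) (nhds 0) := by
      apply squeeze_zero_norm' (a := fun t : ℝ => S * |t|)
      · have h1 : ∀ᶠ t : ℝ in nhdsWithin 0 (Set.Ioi 0), |t| ≤ 1 := by
          apply eventually_nhdsWithin_of_eventually_nhds
          have := (continuous_abs.tendsto (0:ℝ)).eventually (eventually_le_nhds (by norm_num : |(0:ℝ)| < 1))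
          simpa using this
        filter_upwards [h1] with t ht
        exact hest t ht
      · have h2 : Tendsto (fun t : ℝ => S * |t|) (nhds 0) (nhds 0) := by
          have := tendsto_const_nhds (x := S) (f := (nhds (0:ℝ))) |>.mul
            (continuous_abs.tendsto (0:ℝ))
          simpa using this
        exact h2.mono_left nhdsWithin_le_nhds
    have h3 := h0.add (tendsto_const_nhds (x := c k / (Nat.factorial k : ℝ)))
    simpa using h3
  -- now finish
  have hlog : Tendsto (fun t : ℝ => Real.log (hfun t)) (nhdsWithin 0 (Set.Ioi 0))
      (nhds (Real.log (c k / (Nat.factorial k : ℝ)))) :=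
    ((Real.continuousAt_log ha0.ne').tendsto).comp htends
  have hltop : Tendsto Real.log (nhdsWithin (0:ℝ) (Set.Ioi 0)) atBot :=
    Real.tendsto_log_nhdsGT_zero
  have hzero : Tendsto (fun t : ℝ => Real.log (hfun t) / Real.log t)
      (nhdsWithin 0 (Set.Ioi 0)) (nhds 0) := by
    have hneg : Tendsto (fun t : ℝ => -Real.log t) (nhdsWithin (0:ℝ) (Set.Ioi 0)) atTop :=
      tendsto_neg_atBot_atTop.comp hltop
    have := (hlog.neg).div_atTop hneg
    simpa [neg_div_neg_eq] using this
  have hfinal := hzero.const_add (k : ℝ)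
  rw [add_zero] at hfinal
  apply hfinal.congr'
  have hev1 : ∀ᶠ t : ℝ in nhdsWithin 0 (Set.Ioi 0), 0 < hfun t :=
    htends.eventually (eventually_gt_nhds ha0)
  have hev2 : Set.Ioo (0:ℝ) 1 ∈ nhdsWithin (0:ℝ) (Set.Ioi 0) :=
    Ioo_mem_nhdsGT_of_mem ⟨le_refl 0, one_pos⟩
  filter_upwards [hev1, hev2] with t hht ht
  rw [hexp t, hfactor t]
  rw [Real.log_mul (pow_pos ht.1 k).ne' hht.ne', Real.log_pow]
  have hlt : Real.log t ≠ 0 := ne_of_lt (Real.log_neg ht.1 ht.2)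
  field_simp
end
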